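/- Let x_1,...,x_n be pairwise distinct elements of a field, and let V be the n×n Vandermonde matrix with (i,j) entry x_i^{j-1}. Then the (i,j) entry of V^{-1} is w_{ij} = (-1)^{n-i} e_{n-i}(x_1,...,x̂_j,...,x_n) / ∏_{k≠j} (x_j - x_k). -/

import Mathlib

/-- The `k`-th elementary symmetric polynomial of `x_0, …, x_{m-1}`. -/
def esymmAux {R : Type*} [CommRing R] {m : ℕ} (x : Fin m → R) (k : ℕ) : R :=
  ∑ s ∈ Finset.powersetCard k Finset.univ, ∏ i ∈ s, x i

open Finset Polynomial in
lemma esymmAux_eq {F : Type*} [CommRing F] {n : ℕ} (x : Fin (n+1) → F) (b : Fin (n+1)) (k : ℕ) :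
    esymmAux (x ∘ b.succAbove) k = ∑ t ∈ (Finset.univ.erase b).powersetCard k, ∏ i ∈ t, x i := by
  have h : (Finset.univ.erase b) = Finset.univ.map (b.succAboveEmb) := by
    conv_lhs => rw [Fin.univ_succAbove n b]
    rw [Finset.erase_cons]
  rw [h, Finset.powersetCard_map, Finset.sum_map]
  unfold esymmAux
  refine Finset.sum_congr rfl fun s _ => ?_
  rw [show (Finset.mapEmbedding b.succAboveEmb).toEmbedding s = s.map b.succAboveEmb from rfl,
    Finset.prod_map]
  rfl

open Finset Polynomial in
lemma key_eval {F : Type*} [CommRing F] [Nontrivial F] {n : ℕ} (x : Fin (n+1) → F) (a b : Fin (n+1)) :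
    ∑ p : Fin (n+1), x a ^ (p:ℕ) *
      ((-1:F) ^ (n - (p:ℕ)) * esymmAux (x ∘ b.succAbove) (n - (p:ℕ))) =
    ∏ k ∈ Finset.univ.erase b, (x a - x k) := by
  classical
  set s : Finset (Fin (n+1)) := Finset.univ.erase b with hs
  have hcard : s.card = n := by simp [hs]
  set P : Polynomial F := ∏ k ∈ s, (X - C (x k)) with hPdef
  have hP : P = ((s.val.map x).map fun t => X - C t).prod := by
    rw [hPdef, Finset.prod, Multiset.map_map]; rfl
  have hmcard : Multiset.card (s.val.map x) = n := by
    rw [Multiset.card_map]; exact hcard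
  have hdeg : P.natDegree = n := by
    rw [hPdef, Polynomial.natDegree_prod_of_monic _ _ (fun i _ => monic_X_sub_C (x i))]
    simp only [Polynomial.natDegree_X_sub_C, Finset.sum_const, smul_eq_mul, mul_one, hcard]
  have hcoeff : ∀ p : ℕ, p ≤ n →
      P.coeff p = (-1:F)^(n-p) * esymmAux (x ∘ b.succAbove) (n-p) := by
    intro p hp
    rw [hP, Multiset.prod_X_sub_C_coeff _ (by rw [hmcard]; exact hp), hmcard,
      Finset.esymm_map_val, esymmAux_eq]
  have heval : P.eval (x a) = ∏ k ∈ s, (x a - x k) := by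
    simp [hPdef, eval_prod]
  rw [← heval, Polynomial.eval_eq_sum_range, hdeg, ← Fin.sum_univ_eq_sum_range]
  refine Finset.sum_congr rfl fun p _ => ?_
  rw [hcoeff p (Nat.lt_succ_iff.mp p.isLt), mul_comm]

/-- the entries of the inverse of the Vandermonde matrix:
`w_{ij} = (-1)^{n-i} e_{n-i}(x̂_j) / ∏_{k≠j}(x_j - x_k)` (size `n+1`, `0`-based). -/
theorem stmt5 {F : Type*} [Field F] (n : ℕ) (x : Fin (n+1) → F)
    (hx : Function.Injective x) (i j : Fin (n+1)) :
    (Matrix.vandermonde x)⁻¹ i j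
      = (-1 : F) ^ (n - (i : ℕ)) * esymmAux (x ∘ j.succAbove) (n - (i : ℕ)) /
          ∏ k ∈ Finset.univ.erase j, (x j - x k) := by
  classical
  set W : Matrix (Fin (n+1)) (Fin (n+1)) F := fun i j =>
    (-1:F) ^ (n - (i:ℕ)) * esymmAux (x ∘ j.succAbove) (n - (i:ℕ)) /
      ∏ k ∈ Finset.univ.erase j, (x j - x k) with hW
  have hD : ∀ b : Fin (n+1), (∏ k ∈ Finset.univ.erase b, (x b - x k)) ≠ 0 := by
    intro b
    refine Finset.prod_ne_zero_iff.2 fun k hk => ?_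
    have hbk : k ≠ b := Finset.ne_of_mem_erase hk
    exact sub_ne_zero.2 fun h => hbk (hx h.symm)
  have hmul : Matrix.vandermonde x * W = 1 := by
    ext a b
    rw [Matrix.mul_apply]
    simp only [Matrix.vandermonde_apply, hW]
    have : ∀ p : Fin (n+1),
        x a ^ (p:ℕ) * ((-1:F) ^ (n - (p:ℕ)) * esymmAux (x ∘ b.succAbove) (n - (p:ℕ)) /
          ∏ k ∈ Finset.univ.erase b, (x b - x k))
        = x a ^ (p:ℕ) * ((-1:F) ^ (n - (p:ℕ)) * esymmAux (x ∘ b.succAbove) (n - (p:ℕ))) /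
          ∏ k ∈ Finset.univ.erase b, (x b - x k) := fun p => by ring
    rw [Finset.sum_congr rfl fun p _ => this p, ← Finset.sum_div, key_eval]
    by_cases hab : a = b
    · subst hab
      rw [div_self (hD a), Matrix.one_apply_eq]
    · rw [Finset.prod_eq_zero (Finset.mem_erase.2 ⟨hab, Finset.mem_univ a⟩) (sub_self (x a)),
        zero_div, Matrix.one_apply_ne hab]
  rw [Matrix.inv_eq_right_inv hmul]
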